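/- Let A be an abelian category with enough projectives, M an object of A, and P₁ →^{d₁} P₀ →^{d₀} M → 0 a projective presentation with d₀ and the induced map P₁ → Ker(d₀) both projective covers (a minimal projective presentation). Then the commuting diagram with rows P₁ →^{d₁} P₀ →^{d₀} M → 0 and P₁ ⊕ P₀ →^{[d₁, 1]} P₀ → 0 → 0, with vertical maps the inclusion [1;0] : P₁ → P₁ ⊕ P₀, the identity of P₀, and the zero map M → 0, is a minimal projective presentation of the object (M, 0, 0) (i.e., the morphism M → 0) in the arrow category of A. -/

import Mathlib

open CategoryTheory CategoryTheory.Limits ZeroObject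

section

variable {A : Type*} [Category A] [Abelian A]

/-- The zero morphism in the arrow category (componentwise zero). -/
def arrowZero (f g : Arrow A) : f ⟶ g := { left := 0, right := 0, w := by simp }

/-- Zero morphisms in the arrow category (componentwise zero). -/
instance : HasZeroMorphisms (Arrow A) where
  zero f g := ⟨arrowZero f g⟩
  comp_zero := by
    intro X Y f Z
    apply CommaMorphism.ext
    · show f.left ≫ (arrowZero Y Z).left = (arrowZero X Z).left
      exact CategoryTheory.Limits.comp_zero
    · show f.right ≫ (arrowZero Y Z).right = (arrowZero X Z).right
      exact CategoryTheory.Limits.comp_zero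
  zero_comp := by
    intro X Y Z f
    apply CommaMorphism.ext
    · show (arrowZero X Y).left ≫ f.left = (arrowZero X Z).left
      exact CategoryTheory.Limits.zero_comp
    · show (arrowZero X Y).right ≫ f.right = (arrowZero X Z).right
      exact CategoryTheory.Limits.zero_comp

set_option linter.unusedSectionVars false
set_option linter.unnecessarySimpa false
set_option maxHeartbeats 1000000

lemma arrow_zero_left (f g : Arrow A) : CommaMorphism.left (0 : f ⟶ g) = 0 := rfl
lemma arrow_zero_right (f g : Arrow A) : CommaMorphism.right (0 : f ⟶ g) = 0 := rfl

lemma arrow_epi_of_components {f g : Arrow A} (e : f ⟶ g) (hl : Epi e.left)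
    (hr : Epi e.right) : Epi e := by
  constructor
  intro Z a b h
  apply CommaMorphism.ext
  · exact (cancel_epi e.left).mp (by simpa using congrArg CommaMorphism.left h)
  · exact (cancel_epi e.right).mp (by simpa using congrArg CommaMorphism.right h)

lemma arrow_epi_right {f g : Arrow A} (e : f ⟶ g) [Epi e] : Epi e.right := by
  constructor
  intro Z a b h
  have key : e ≫ (Arrow.homMk (u := g.hom ≫ a) (v := a) (by simp) : g ⟶ Arrow.mk (𝟙 Z))
      = e ≫ (Arrow.homMk (u := g.hom ≫ b) (v := b) (by simp)) := by
    apply CommaMorphism.ext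
    · show e.left ≫ g.hom ≫ a = e.left ≫ g.hom ≫ b
      rw [reassoc_of% (Arrow.w e), reassoc_of% (Arrow.w e), h]
    · simpa using h
  have := (cancel_epi e).mp key
  simpa using congrArg CommaMorphism.right this

lemma arrow_epi_left {f g : Arrow A} (e : f ⟶ g) [Epi e] : Epi e.left := by
  constructor
  intro Z a b h
  have key : e ≫ (Arrow.homMk (u := a) (v := 0)
        ((isZero_zero A).eq_of_tgt _ _) : g ⟶ Arrow.mk (0 : Z ⟶ (0 : A)))
      = e ≫ (Arrow.homMk (u := b) (v := 0) ((isZero_zero A).eq_of_tgt _ _)) := by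
    apply CommaMorphism.ext
    · simpa using h
    · exact (isZero_zero A).eq_of_tgt _ _
  have := (cancel_epi e).mp key
  simpa using congrArg CommaMorphism.left this


lemma arrow_projective_id {P : A} (hP : Projective P) :
    Projective (Arrow.mk (𝟙 P)) := by
  constructor
  intro E X f e he
  have hel : Epi e.left := arrow_epi_left e
  obtain ⟨l, hl⟩ := hP.factors f.left e.left
  refine ⟨Arrow.homMk (u := l) (v := l ≫ E.hom) (by simp), ?_⟩
  apply CommaMorphism.ext
  · simpa using hl
  · show (l ≫ E.hom) ≫ e.right = f.right
    rw [Category.assoc, ← Arrow.w e, ← Category.assoc, hl]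
    simpa using (Arrow.w f).symm

lemma arrow_projective_inl {P Q : A} (hP : Projective P) (hQ : Projective Q) :
    Projective (Arrow.mk (biprod.inl : P ⟶ P ⊞ Q)) := by
  constructor
  intro E X f e he
  have hel : Epi e.left := arrow_epi_left e
  have her : Epi e.right := arrow_epi_right e
  obtain ⟨l, hl⟩ := hP.factors f.left e.left
  obtain ⟨r₀, hr₀⟩ := hQ.factors (biprod.inr ≫ f.right) e.right
  refine ⟨Arrow.homMk (u := l) (v := biprod.desc (l ≫ E.hom) r₀) (by simp), ?_⟩
  apply CommaMorphism.ext
  · simpa using hl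
  · show biprod.desc (l ≫ E.hom) r₀ ≫ e.right = f.right
    apply biprod.hom_ext'
    · rw [biprod.inl_desc_assoc, Category.assoc, ← Arrow.w e, ← Category.assoc, hl]
      simpa using Arrow.w f
    · rw [biprod.inr_desc_assoc, hr₀]

/-- `p : P ⟶ M` is a projective cover: `P` is projective, `p` is an epimorphism and `p` is
right minimal. -/
def IsProjectiveCover {C : Type*} [Category C] {P M : C} (p : P ⟶ M) : Prop :=
  Projective P ∧ Epi p ∧ ∀ θ : P ⟶ P, θ ≫ p = p → IsIso θ

variable {M P₁ P₀ : A} (d₁ : P₁ ⟶ P₀) (d₀ : P₀ ⟶ M) (w0 : d₁ ≫ d₀ = 0)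

/-- The augmentation `(d₀, 0) : (P₀, 1, P₀) ⟶ (M, 0, 0)` in the arrow category. -/
noncomputable def arrowE₀ : Arrow.mk (𝟙 P₀) ⟶ Arrow.mk (0 : M ⟶ (0 : A)) :=
  Arrow.homMk (u := d₀) (v := (0 : P₀ ⟶ (0 : A))) (by simp)

/-- The map `(d₁, [d₁,1]) : (P₁, [1;0], P₁ ⊕ P₀) ⟶ (P₀, 1, P₀)` in the arrow category. -/
noncomputable def arrowE₁ : Arrow.mk (biprod.inl : P₁ ⟶ P₁ ⊞ P₀) ⟶ Arrow.mk (𝟙 P₀) :=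
  Arrow.homMk (u := d₁) (v := biprod.desc d₁ (𝟙 P₀)) (by simp)

/-- The inclusion of the (componentwise) kernel of `(d₀, 0)` into `(P₀, 1, P₀)`. -/
noncomputable def arrowKerι : Arrow.mk (kernel.ι d₀) ⟶ Arrow.mk (𝟙 P₀) :=
  Arrow.homMk (u := kernel.ι d₀) (v := 𝟙 P₀) (by simp)

/-- The induced map from `(P₁, [1;0], P₁ ⊕ P₀)` to the kernel of `(d₀, 0)`. -/
noncomputable def arrowKerLift : Arrow.mk (biprod.inl : P₁ ⟶ P₁ ⊞ P₀) ⟶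
    Arrow.mk (kernel.ι d₀) :=
  Arrow.homMk (u := kernel.lift d₀ d₁ w0) (v := biprod.desc d₁ (𝟙 P₀)) (by simp)


section Main

variable [EnoughProjectives A]

include w0 in
lemma arrow_we : arrowE₁ d₁ ≫ arrowE₀ d₀ = 0 := by
  apply CommaMorphism.ext
  · rw [arrow_zero_left]
    simp [arrowE₁, arrowE₀, w0]
  · exact (isZero_zero A).eq_of_tgt _ _

lemma arrow_wι : arrowKerι d₀ ≫ arrowE₀ d₀ = 0 := by
  apply CommaMorphism.ext
  · rw [arrow_zero_left]
    simp [arrowKerι, arrowE₀]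
  · exact (isZero_zero A).eq_of_tgt _ _

/-- `d₀` is the cokernel of `d₁` when the induced map to the kernel is epi and `d₀` is epi. -/
noncomputable def baseCokerIsColimit (hd₀e : Epi d₀)
    (hlift : Epi (kernel.lift d₀ d₁ w0)) :
    IsColimit (CokernelCofork.ofπ d₀ w0) := by
  let S : ShortComplex A := ShortComplex.mk d₁ d₀ w0
  have hS : S.Exact := S.exact_iff_epi_kernel_lift.mpr hlift
  haveI : Epi S.g := hd₀e
  exact hS.gIsCokernel

noncomputable def arrowCokerIsColimit (hd₀e : Epi d₀)
    (hlift : Epi (kernel.lift d₀ d₁ w0))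
    (we : arrowE₁ d₁ ≫ arrowE₀ d₀ = 0) :
    IsColimit (CokernelCofork.ofπ (arrowE₀ d₀) we) := by
  have hcoker := baseCokerIsColimit d₁ d₀ w0 hd₀e hlift
  refine CokernelCofork.IsColimit.ofπ _ _
    (fun {Z} g hg => ?desc) (fun {Z} g hg => ?fac) (fun {Z} g hg m hm => ?uniq)
  case desc =>
    have hgl : d₁ ≫ g.left = 0 := by
      have h := congrArg CommaMorphism.left hg
      rw [arrow_zero_left] at h
      simpa [arrowE₁] using h
    exact Arrow.homMk (u := hcoker.desc (CokernelCofork.ofπ g.left hgl))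
      (v := 0)
      (by
        have fac0 : d₀ ≫ hcoker.desc (CokernelCofork.ofπ g.left hgl) = g.left :=
          Cofork.IsColimit.π_desc hcoker
        have hgr : g.right = 0 := by
          have h := congrArg CommaMorphism.right hg
          rw [arrow_zero_right] at h
          have h2 := congrArg (fun t => biprod.inr ≫ t) h
          simp only [Arrow.comp_right] at h2
          simpa [arrowE₁] using h2
        have hsq : g.left ≫ Z.hom = 0 := by
          have := Arrow.w g
          simp only [Arrow.mk_hom, Category.id_comp] at this
          rw [this, hgr, comp_zero]
        haveI : Epi d₀ := hd₀e
        rw [← cancel_epi d₀]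
        simp [reassoc_of% fac0, hsq, hgr])
  case fac =>
    have hgl : d₁ ≫ g.left = 0 := by
      have h := congrArg CommaMorphism.left hg
      rw [arrow_zero_left] at h
      simpa [arrowE₁] using h
    have hgr : g.right = 0 := by
      have h := congrArg CommaMorphism.right hg
      rw [arrow_zero_right] at h
      have h2 := congrArg (fun t => biprod.inr ≫ t) h
      simp only [Arrow.comp_right] at h2
      simpa [arrowE₁] using h2
    apply CommaMorphism.ext
    · have fac0 : d₀ ≫ hcoker.desc (CokernelCofork.ofπ g.left hgl) = g.left :=
        Cofork.IsColimit.π_desc hcoker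
      simpa [arrowE₀] using fac0
    · refine Eq.trans ?_ hgr.symm
      simp only [Arrow.comp_right]
      simp [arrowE₀]
  case uniq =>
    have hgl : d₁ ≫ g.left = 0 := by
      have h := congrArg CommaMorphism.left hg
      rw [arrow_zero_left] at h
      simpa [arrowE₁] using h
    apply CommaMorphism.ext
    · have fac0 : d₀ ≫ hcoker.desc (CokernelCofork.ofπ g.left hgl) = g.left :=
        Cofork.IsColimit.π_desc hcoker
      haveI : Epi d₀ := hd₀e
      have h : d₀ ≫ m.left = g.left := by
        simpa [arrowE₀] using congrArg CommaMorphism.left hm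
      rw [← cancel_epi d₀]
      exact h.trans fac0.symm
    · exact (isZero_zero A).eq_of_src _ _

noncomputable def arrowKerIsLimit (wι : arrowKerι d₀ ≫ arrowE₀ d₀ = 0) :
    IsLimit (KernelFork.ofι (arrowKerι d₀) wι) := by
  refine KernelFork.IsLimit.ofι _ _
    (fun {Z} g hg => ?lift) (fun {Z} g hg => ?fac) (fun {Z} g hg m hm => ?uniq)
  case lift =>
    have hgl : g.left ≫ d₀ = 0 := by
      have h := congrArg CommaMorphism.left hg
      rw [arrow_zero_left] at h
      simpa [arrowE₀] using h
    exact Arrow.homMk (u := kernel.lift d₀ g.left hgl) (v := g.right)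
      (by
        have hw := Arrow.w g
        simp only [Arrow.mk_hom] at hw
        simp only [Arrow.mk_hom, kernel.lift_ι]
        rw [← hw]; simp)
  case fac =>
    apply CommaMorphism.ext
    · simp [arrowKerι]
    · simp [arrowKerι]
  case uniq =>
    apply CommaMorphism.ext
    · rw [← cancel_mono (kernel.ι d₀)]
      have h := congrArg CommaMorphism.left hm
      simp only [Arrow.comp_left] at h
      simpa [arrowKerι] using h
    · have h := congrArg CommaMorphism.right hm
      simp only [Arrow.comp_right] at h
      simpa [arrowKerι] using h

lemma arrowE₀_isProjectiveCover (hd₀ : IsProjectiveCover d₀) :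
    IsProjectiveCover (arrowE₀ d₀) := by
  obtain ⟨hproj, hepi, hmin⟩ := hd₀
  refine ⟨arrow_projective_id hproj, ?_, ?_⟩
  · apply arrow_epi_of_components
    · simp only [arrowE₀, Arrow.homMk_left]
      exact hepi
    · exact ⟨fun a b _ => (isZero_zero A).eq_of_src a b⟩
  · intro θ hθ
    have hl : θ.left ≫ d₀ = d₀ := by
      simpa [arrowE₀] using congrArg CommaMorphism.left hθ
    have hlr : θ.left = θ.right := by
      have := Arrow.w θ
      simpa using this
    haveI : IsIso θ.left := hmin θ.left hl
    refine ⟨⟨{ left := inv θ.left, right := inv θ.left, w := by simp }, ?_, ?_⟩⟩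
    · apply CommaMorphism.ext
      · show θ.left ≫ inv θ.left = 𝟙 P₀
        simp
      · show θ.right ≫ inv θ.left = 𝟙 P₀
        rw [← hlr]; simp
    · apply CommaMorphism.ext
      · show inv θ.left ≫ θ.left = 𝟙 P₀
        simp
      · show inv θ.left ≫ θ.right = 𝟙 P₀
        rw [← hlr]; simp

lemma arrowKerLift_isProjectiveCover (hP₁ : Projective P₁) (hP₀ : Projective P₀)
    (hd₀ : IsProjectiveCover d₀)
    (hker : IsProjectiveCover (kernel.lift d₀ d₁ w0)) :
    IsProjectiveCover (arrowKerLift d₁ d₀ w0) := by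
  refine ⟨arrow_projective_inl hP₁ hP₀, ?_, ?_⟩
  · apply arrow_epi_of_components
    · simp only [arrowKerLift, Arrow.homMk_left]
      exact hker.2.1
    · simp only [arrowKerLift, Arrow.homMk_right]
      haveI : IsSplitEpi (biprod.desc d₁ (𝟙 P₀)) :=
        IsSplitEpi.mk' ⟨biprod.inr, by simp⟩
      infer_instance
  · intro θ hθ
    let a : P₁ ⟶ P₁ := θ.left
    let b : P₁ ⊞ P₀ ⟶ P₁ ⊞ P₀ := θ.right
    have hw : a ≫ (biprod.inl : P₁ ⟶ P₁ ⊞ P₀) = biprod.inl ≫ b := Arrow.w θ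
    have ha : a ≫ kernel.lift d₀ d₁ w0 = kernel.lift d₀ d₁ w0 := by
      simpa [arrowKerLift] using congrArg CommaMorphism.left hθ
    haveI hisoa : IsIso a := hker.2.2 a ha
    have hb : b ≫ biprod.desc d₁ (𝟙 P₀) = biprod.desc d₁ (𝟙 P₀) := by
      simpa [arrowKerLift] using congrArg CommaMorphism.right hθ
    set x : P₀ ⟶ P₁ := biprod.inr ≫ b ≫ biprod.fst with hx
    set y : P₀ ⟶ P₀ := biprod.inr ≫ b ≫ biprod.snd with hy
    have hxy : biprod.inr ≫ b = x ≫ biprod.inl + y ≫ biprod.inr := by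
      apply biprod.hom_ext <;> simp [hx, hy]
    have hy1 : x ≫ d₁ + y = 𝟙 P₀ := by
      have h1 : (biprod.inr ≫ b) ≫ biprod.desc d₁ (𝟙 P₀) = 𝟙 P₀ := by
        rw [Category.assoc, hb]; simp
      rw [hxy] at h1
      simpa using h1
    have hyd : y ≫ d₀ = d₀ := by
      have := congrArg (fun t => t ≫ d₀) hy1
      simpa [Preadditive.add_comp, Category.assoc, w0] using this
    haveI hisoy : IsIso y := hd₀.2.2 y hyd
    set c : P₁ ⊞ P₀ ⟶ P₁ ⊞ P₀ :=
      biprod.desc (inv a ≫ biprod.inl)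
        ((-(inv y ≫ x ≫ inv a)) ≫ biprod.inl + inv y ≫ biprod.inr) with hc
    have hbc : b ≫ c = 𝟙 (P₁ ⊞ P₀) := by
      apply biprod.hom_ext'
      · rw [← Category.assoc, ← hw, Category.assoc]
        simp [hc]
      · rw [← Category.assoc, hxy]
        simp only [hc, Preadditive.add_comp, Category.assoc, biprod.inl_desc, biprod.inr_desc,
          Preadditive.comp_add, Preadditive.neg_comp, Preadditive.comp_neg,
          IsIso.hom_inv_id_assoc, Category.comp_id]
        abel
    have hcb : c ≫ b = 𝟙 (P₁ ⊞ P₀) := by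
      apply biprod.hom_ext'
      · simp only [hc, biprod.inl_desc_assoc, Category.assoc, ← hw]
        simp
      · have e1 : biprod.inr ≫ c ≫ b
            = ((-(inv y ≫ x ≫ inv a)) ≫ biprod.inl + inv y ≫ biprod.inr) ≫ b := by
          rw [hc, ← Category.assoc, biprod.inr_desc]
        rw [e1, Preadditive.add_comp, Category.assoc, Category.assoc, ← hw]
        simp only [Category.assoc]
        rw [hxy]
        simp only [Preadditive.neg_comp, Preadditive.comp_add, Category.assoc,
          IsIso.inv_hom_id_assoc, Category.comp_id]
        simp only [hx, Category.assoc]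
        abel
    haveI hisob : IsIso b := ⟨c, hbc, hcb⟩
    have hwinv : inv a ≫ (biprod.inl : P₁ ⟶ P₁ ⊞ P₀) = biprod.inl ≫ inv b := by
      rw [← cancel_mono b]
      simp only [Category.assoc, ← hw]
      simp
    refine ⟨⟨{ left := inv a, right := inv b, w := by simpa using hwinv }, ?_, ?_⟩⟩
    · apply CommaMorphism.ext
      · show a ≫ inv a = 𝟙 P₁
        simp
      · show b ≫ inv b = 𝟙 (P₁ ⊞ P₀)
        simp
    · apply CommaMorphism.ext
      · show inv a ≫ a = 𝟙 P₁
        simp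
      · show inv b ≫ b = 𝟙 (P₁ ⊞ P₀)
        simp

end Main

/-- if `P₁ → P₀ → M → 0` is a minimal projective presentation in the abelian
category `A` (with enough projectives), then
`(P₁, [1;0], P₁⊕P₀) → (P₀, 1, P₀) → (M, 0, 0) → 0`, with the displayed vertical maps, is a
minimal projective presentation in the arrow category of `A`: the augmentation is the
cokernel of the first map and a projective cover, and the induced map to the kernel of
the augmentation is a projective cover. -/
theorem minimal_projective_presentation_in_arrow_category
    [EnoughProjectives A]
    (hP₁ : Projective P₁) (hP₀ : Projective P₀)
    (hd₀ : IsProjectiveCover d₀)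
    (hker : IsProjectiveCover (kernel.lift d₀ d₁ w0)) :
    ∃ (we : arrowE₁ d₁ ≫ arrowE₀ d₀ = 0) (wι : arrowKerι d₀ ≫ arrowE₀ d₀ = 0),
      Nonempty (IsColimit (CokernelCofork.ofπ (arrowE₀ d₀) we)) ∧
      Nonempty (IsLimit (KernelFork.ofι (arrowKerι d₀) wι)) ∧
      IsProjectiveCover (arrowE₀ d₀) ∧
      IsProjectiveCover (arrowKerLift d₁ d₀ w0) := by
  refine ⟨arrow_we d₁ d₀ w0, arrow_wι d₀, ?_, ?_, ?_, ?_⟩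
  · exact ⟨arrowCokerIsColimit d₁ d₀ w0 hd₀.2.1 hker.2.1 _⟩
  · exact ⟨arrowKerIsLimit d₀ _⟩
  · exact arrowE₀_isProjectiveCover d₀ hd₀
  · exact arrowKerLift_isProjectiveCover d₁ d₀ w0 hP₁ hP₀ hd₀ hker

end
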